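/- Let R be a commutative ring, A = [[a,b],[c,d]] ∈ M₂(R) unimodular with det(A) not a zero divisor in R. If there exists C ∈ M₂(R) with det(C) = 0 and det(A + det(A)·C) = 0, then there exists (x,y,z,w) ∈ R⁴ with ax + by + cz + dw = 1 and xw − yz = 0. -/
import Mathlib


open Matrix

theorem stmt4 {R : Type*} [CommRing R] (a b c d : R)
    (hA : Ideal.span {a, b, c, d} = (⊤ : Ideal R))
    (hnz : ∀ s : R, (a * d - b * c) * s = 0 → s = 0)
    (C : Matrix (Fin 2) (Fin 2) R) (hC : C.det = 0)
    (hB : ((!![a, b; c, d] : Matrix (Fin 2) (Fin 2) R) + (a * d - b * c) • C).det = 0) :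
    ∃ x y z w : R, a * x + b * y + c * z + d * w = 1 ∧ x * w - y * z = 0 := by
  simp [Matrix.det_fin_two, Matrix.add_apply, Matrix.smul_apply, smul_eq_mul] at hC hB
  have key : C 1 1 * a + C 1 0 * (-b) + C 0 1 * (-c) + C 0 0 * d + 1 = 0 := by
    apply hnz
    linear_combination hB - (a * d - b * c) ^ 2 * hC
  refine ⟨-(C 1 1), C 1 0, C 0 1, -(C 0 0), by linear_combination -key,
    by linear_combination hC⟩
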